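/- Let n ≥ 1, let A, B, C be real symmetric n×n matrices with A positive definite and C negative semidefinite, let k > 0 be real, let c ∈ ℂ and let U ∈ ℂⁿ be nonzero, such that (−c·A + B + (i/k)·C)·U = 0. Then the imaginary part of c satisfies Im(c) = Re(U* C U)/(k · U* A U) ≤ 0, where U* denotes the conjugate transpose. -/

import Mathlib

open scoped Matrix

lemma quad_im_zero' {n : ℕ} (M : Matrix (Fin n) (Fin n) ℝ) (hM : M.IsSymm) (U : Fin n → ℂ) :
    (star U ⬝ᵥ (M.map Complex.ofReal).mulVec U).im = 0 := by
  have hH : (M.map Complex.ofReal).conjTranspose = M.map Complex.ofReal := by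
    ext i j
    simp [Matrix.conjTranspose_apply, Matrix.map_apply, hM.apply i j]
  have h : (starRingEnd ℂ) (star U ⬝ᵥ (M.map Complex.ofReal).mulVec U)
      = star U ⬝ᵥ (M.map Complex.ofReal).mulVec U := by
    calc (starRingEnd ℂ) (star U ⬝ᵥ (M.map Complex.ofReal).mulVec U)
        = star (star U ⬝ᵥ (M.map Complex.ofReal).mulVec U) := rfl
      _ = star ((M.map Complex.ofReal).mulVec U) ⬝ᵥ star (star U) := by
          rw [Matrix.star_dotProduct_star]
      _ = (Matrix.vecMul (star U) (M.map Complex.ofReal).conjTranspose) ⬝ᵥ U := by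
          rw [Matrix.star_mulVec, star_star]
      _ = star U ⬝ᵥ (M.map Complex.ofReal).mulVec U := by
          rw [hH, ← Matrix.dotProduct_mulVec]
  exact Complex.conj_eq_iff_im.mp h

lemma quad_re_eq' {n : ℕ} (M : Matrix (Fin n) (Fin n) ℝ) (U : Fin n → ℂ) :
    (star U ⬝ᵥ (M.map Complex.ofReal).mulVec U).re =
      (fun i => (U i).re) ⬝ᵥ M.mulVec (fun i => (U i).re)
      + (fun i => (U i).im) ⬝ᵥ M.mulVec (fun i => (U i).im) := by
  simp only [dotProduct, Matrix.mulVec, Matrix.map_apply, Pi.star_apply,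
    Finset.mul_sum, ← Finset.sum_add_distrib, Complex.re_sum]
  refine Finset.sum_congr rfl fun i _ => ?_
  refine Finset.sum_congr rfl fun j _ => ?_
  simp [Complex.mul_re]

/-- Linear stability of the dispersion relation: if `A` is symmetric positive definite,
`B` symmetric, `C` symmetric negative semidefinite, `k > 0`, and a nonzero complex vector
`U` satisfies `(−c·A + B + (i/k)·C)·U = 0`, then
`Im(c) = Re(U* C U)/(k · U* A U) ≤ 0`. -/
theorem stmt_9 (n : ℕ) (hn : 1 ≤ n) (A B C : Matrix (Fin n) (Fin n) ℝ)
    (hA : A.PosDef) (hB : B.IsSymm) (hC : (-C).PosSemidef)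
    (k : ℝ) (hk : 0 < k) (c : ℂ) (U : Fin n → ℂ) (hU : U ≠ 0)
    (heq : ((-c) • A.map Complex.ofReal + B.map Complex.ofReal
      + (Complex.I / (k : ℂ)) • C.map Complex.ofReal).mulVec U = 0) :
    c.im = (star U ⬝ᵥ (C.map Complex.ofReal).mulVec U).re /
      (k * (star U ⬝ᵥ (A.map Complex.ofReal).mulVec U).re) ∧
    c.im ≤ 0 := by
  set X : Fin n → ℝ := fun i => (U i).re with hX
  set Y : Fin n → ℝ := fun i => (U i).im with hY
  set a : ℂ := star U ⬝ᵥ (A.map Complex.ofReal).mulVec U with ha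
  set b : ℂ := star U ⬝ᵥ (B.map Complex.ofReal).mulVec U with hb
  set cc : ℂ := star U ⬝ᵥ (C.map Complex.ofReal).mulVec U with hcc
  -- symmetry of A, C
  have hAs : A.IsSymm := hA.isHermitian
  have hCs : C.IsSymm := by
    have := hC.isHermitian
    have : (-C).IsSymm := this
    simpa using this.neg
  have ha_im : a.im = 0 := quad_im_zero' A hAs U
  have hb_im : b.im = 0 := quad_im_zero' B hB U
  have hcc_im : cc.im = 0 := quad_im_zero' C hCs U
  -- a.re > 0
  have ha_pos : 0 < a.re := by
    rw [ha, quad_re_eq' A U]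
    have hXY : X ≠ 0 ∨ Y ≠ 0 := by
      by_contra h
      push_neg at h
      apply hU
      funext i
      have h1 : X i = 0 := by rw [h.1]; rfl
      have h2 : Y i = 0 := by rw [h.2]; rfl
      exact Complex.ext h1 h2
    have hnn : ∀ v : Fin n → ℝ, 0 ≤ v ⬝ᵥ A.mulVec v := fun v => by
      simpa using hA.posSemidef.dotProduct_mulVec_nonneg v
    have hpos : ∀ v : Fin n → ℝ, v ≠ 0 → 0 < v ⬝ᵥ A.mulVec v := fun v hv => by
      simpa using hA.dotProduct_mulVec_pos hv
    rcases hXY with h | h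
    · exact add_pos_of_pos_of_nonneg (hpos X h) (hnn Y)
    · exact add_pos_of_nonneg_of_pos (hnn X) (hpos Y h)
  -- cc.re ≤ 0
  have hcc_nonpos : cc.re ≤ 0 := by
    rw [hcc, quad_re_eq' C U]
    have hnn : ∀ v : Fin n → ℝ, 0 ≤ v ⬝ᵥ (-C).mulVec v := fun v => by
      simpa using hC.dotProduct_mulVec_nonneg v
    have h1 := hnn X
    have h2 := hnn Y
    simp only [Matrix.neg_mulVec, dotProduct_neg] at h1 h2
    linarith
  -- scalar equation
  have h0 : (-c) * a + b + (Complex.I / (k : ℂ)) * cc = 0 := by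
    have := congrArg (fun v => star U ⬝ᵥ v) heq
    simpa only [Matrix.add_mulVec, Matrix.smul_mulVec, dotProduct_add,
      dotProduct_smul, smul_eq_mul, dotProduct_zero, ha, hb, hcc] using this
  -- take imaginary part
  have him := congrArg Complex.im h0
  have hk0 : (k : ℝ) ≠ 0 := ne_of_gt hk
  simp only [Complex.add_im, Complex.mul_im, Complex.neg_im, Complex.neg_re,
    Complex.div_im, Complex.div_re, Complex.I_re, Complex.I_im, Complex.ofReal_re,
    Complex.ofReal_im, Complex.zero_im, ha_im, hb_im, hcc_im] at him
  have him' : -(c.im * a.re) + cc.re / k = 0 := by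
    field_simp at him ⊢
    ring_nf at him ⊢
    rw [Complex.normSq_ofReal] at him
    have h' : k * (-(c.im * a.re * k) + cc.re) = 0 := by linear_combination him
    exact (mul_eq_zero.mp h').resolve_left hk0
  have hcim : c.im = cc.re / (k * a.re) := by
    field_simp at him' ⊢
    linarith [him']
  refine ⟨hcim, ?_⟩
  rw [hcim]
  apply div_nonpos_of_nonpos_of_nonneg hcc_nonpos
  positivity
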